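/- arXiv:2412.13622 — 4 statements merged into one kernel-verified Lean document; each statement's English description precedes it below -/
import Mathlib

section
/- For every instance I, the greedy choice function output Ch*(I) satisfies maximal diversity and balanced representation: there exists a rank-maximal matching M of size at most q that attains balanced representation and whose set of covered students equals Ch*(I). -/
open Classical

/-- An instance `I = (S, q, ≻, T, τ, η)`: a finite set of students with a strict
total order (priority, modeled by a linear order where `s' < s` means `s ≻ s'`),
a positive capacity `q`, a finite set of types `T`, a type assignment `τ`, and
ranked quotas `η t j` for ranks `j ∈ {1,…,r}`. -/
structure Inst where
  S : Type
  T : Type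
  [fS : Fintype S]
  [dS : DecidableEq S]
  [lS : LinearOrder S]
  [fT : Fintype T]
  [dT : DecidableEq T]
  q : ℕ
  qpos : 0 < q
  r : ℕ
  τ : S → Finset T
  η : T → ℕ → ℕ

attribute [instance] Inst.fS Inst.dS Inst.lS Inst.fT Inst.dT

/-- `s ≻ s'` : student `s` has strictly higher priority than `s'`. -/
def Inst.prio (I : Inst) (s s' : I.S) : Prop := s' < s

/-- A (potential) reserved seat: a type (`none` = the general type `t₀`),
a rank, and an index. -/
abbrev SeatT (I : Inst) := Option I.T × ℕ × ℕ

/-- The rank of a seat. -/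
def seatRank (I : Inst) (v : SeatT I) : ℕ := v.2.1

/-- The type of a seat (`none` = general type `t₀`). -/
def seatType (I : Inst) (v : SeatT I) : Option I.T := v.1

/-- Seats actually present in the ranked reservation graph: for each type `t`, rank
`1 ≤ j ≤ r` and index `i < η t j` a seat, and `q` general seats of rank `r`. -/
def SeatValid (I : Inst) (v : SeatT I) : Prop :=
  match v.1 with
  | some t => 1 ≤ v.2.1 ∧ v.2.1 ≤ I.r ∧ v.2.2 < I.η t v.2.1
  | none => v.2.1 = I.r ∧ v.2.2 < I.q

/-- There is an edge between student `s` and a seat of type `t` iff `t ∈ τ s` or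
`t` is the general type `t₀`. -/
def EdgeOK (I : Inst) (s : I.S) (v : SeatT I) : Prop :=
  match v.1 with
  | some t => t ∈ I.τ s
  | none => True

/-- A matching in the ranked reservation graph: a set of edges of `G` in which
every student and every seat appears at most once. -/
def IsMatching (I : Inst) (M : Finset (I.S × SeatT I)) : Prop :=
  (∀ e ∈ M, SeatValid I e.2 ∧ EdgeOK I e.1 e.2) ∧
  (∀ e ∈ M, ∀ e' ∈ M, e.1 = e'.1 → e = e') ∧
  (∀ e ∈ M, ∀ e' ∈ M, e.2 = e'.2 → e = e')

/-- `S_M`: the set of students covered by the matching `M`. -/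
def covered (I : Inst) (M : Finset (I.S × SeatT I)) : Finset I.S := M.image Prod.fst

/-- `x_i`: the number of edges of rank `i` in `M` (the `i`-th entry of the
signature `ρ(M)`). -/
def sig (I : Inst) (M : Finset (I.S × SeatT I)) (i : ℕ) : ℕ :=
  (M.filter (fun e => seatRank I e.2 = i)).card

/-- `ρ(M) <lex ρ(M')` : the signature of `M'` is lexicographically strictly
better than that of `M`. -/
def SigLT (I : Inst) (M M' : Finset (I.S × SeatT I)) : Prop :=
  ∃ k, 1 ≤ k ∧ k ≤ I.r ∧ (∀ i, 1 ≤ i → i < k → sig I M i = sig I M' i) ∧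
    sig I M k < sig I M' k

/-- A matching of size at most `q` is rank-maximal if its signature is
lexicographically ≥ that of every matching of size at most `q`. -/
def RankMaximal (I : Inst) (M : Finset (I.S × SeatT I)) : Prop :=
  IsMatching I M ∧ M.card ≤ I.q ∧
    ∀ M', IsMatching I M' → M'.card ≤ I.q → ¬ SigLT I M M'

/-- `U`: the set of groups (type combinations actually occurring among students). -/
def groups (I : Inst) : Finset (Finset I.T) := Finset.univ.image I.τ

/-- `S_u`: the set of students of group `u`. -/
def Su (I : Inst) (u : Finset I.T) : Finset I.S :=
  Finset.univ.filter (fun s => I.τ s = u)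

/-- `|M_u|`: the number of students of group `u` covered by `M`. -/
def Mu (I : Inst) (M : Finset (I.S × SeatT I)) (u : Finset I.T) : ℕ :=
  ((covered I M).filter (fun s => I.τ s = u)).card

/-- `min_{u ∈ U} |M_u| / |S_u|` (as `WithTop ℚ`; it is `⊤` iff `U = ∅`). -/
noncomputable def minRatio (I : Inst) (M : Finset (I.S × SeatT I)) : WithTop ℚ :=
  ((groups I).image (fun u => ((Mu I M u : ℚ) / ((Su I u).card : ℚ)))).min

/-- `M` attains balanced representation: `M` is rank-maximal of size at most `q`
and maximizes `min_{u∈U} |M_u|/|S_u|` over all such matchings. -/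
def BalancedRep (I : Inst) (M : Finset (I.S × SeatT I)) : Prop :=
  RankMaximal I M ∧ ∀ M', RankMaximal I M' → minRatio I M' ≤ minRatio I M

/-- The greedy choice function `Ch*`: process the students in decreasing order of
priority, adding the current student `s` whenever some matching of size at most `q`
that is rank-maximal and attains balanced representation covers `S* ∪ {s}`. -/
noncomputable def ChStar (I : Inst) : Finset I.S :=
  ((Finset.sort (Finset.univ : Finset I.S) (· ≤ ·)).reverse).foldl
    (fun A s =>
      if ∃ M, BalancedRep I M ∧ insert s A ⊆ covered I M then insert s A else A) ∅

/-- Non-wastefulness of a chosen set: `|S*| = min (|S|, q)`. -/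
def NonWasteful (I : Inst) (A : Finset I.S) : Prop :=
  A.card = min (Fintype.card I.S) I.q

/-- Maximal diversity of a chosen set: some rank-maximal matching of size at most
`q` covers only students of `S*`. -/
def MaxDiversity (I : Inst) (A : Finset I.S) : Prop :=
  ∃ M, RankMaximal I M ∧ covered I M ⊆ A

/-- Balanced representation of a chosen set: some matching in `𝕄` attaining
balanced representation covers all of `S*`. -/
def BalancedRepSet (I : Inst) (A : Finset I.S) : Prop :=
  ∃ M, BalancedRep I M ∧ A ⊆ covered I M

/-- Justified envy-freeness: no `s ∉ S*`, `s' ∈ S*` with `s ≻ s'` such that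
`(S* ∪ {s}) \ {s'}` satisfies both maximal diversity and balanced representation. -/
def JEF (I : Inst) (A : Finset I.S) : Prop :=
  ¬ ∃ s s', s ∉ A ∧ s' ∈ A ∧ I.prio s s' ∧
    MaxDiversity I (insert s A \ {s'}) ∧ BalancedRepSet I (insert s A \ {s'})

/-- `I` is valid w.r.t. a target vector `δ`: some rank-maximal matching of size at
most `q` has `|M_u| ≥ δ_u` for every group `u ∈ U`. -/
def ValidWrt (I : Inst) (δ : Finset I.T → ℕ) : Prop :=
  ∃ M, RankMaximal I M ∧ ∀ u ∈ groups I, δ u ≤ Mu I M u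

/-- The max-min ratio `α(I)`: the maximum over rank-maximal matchings `M` of
size at most `q` of `min_{u∈U} |M_u|/|S_u|`. -/
noncomputable def alphaQ (I : Inst) : ℚ :=
  let cands : Finset ℚ :=
    ((Finset.Icc 0 (Fintype.card I.S)) ×ˢ groups I).image
      (fun p => (p.1 : ℚ) / ((Su I p.2).card : ℚ))
  WithBot.unbotD 0 ((cands.filter
      (fun x : ℚ => ∃ M, RankMaximal I M ∧ minRatio I M = (x : WithTop ℚ))).max)

/-- The crucial vector `δ*` : `δ*_u = ⌊α(I)·|S_u|⌋`. -/
noncomputable def deltaStar (I : Inst) (u : Finset I.T) : ℕ :=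
  ⌊alphaQ I * ((Su I u).card : ℚ)⌋₊

/-- The `k` highest-priority students of `A`. -/
def topK (I : Inst) (A : Finset I.S) (k : ℕ) : Finset I.S :=
  A.filter (fun s => (A.filter (fun s' => s ≤ s')).card ≤ k)

/-! ### The flow network -/

/-- Nodes of the flow network: `Sum.inl 0` = source `a`, `Sum.inl 1` = sink `b`,
`Sum.inl 2` = the capacity node `Q`; group nodes, type nodes (`none` = `t₀`),
and rank nodes `t^i` (rank value `i+1` for `i : Fin r`). -/
abbrev Node (I : Inst) := Fin 3 ⊕ Finset I.T ⊕ Option I.T ⊕ (Option I.T × Fin I.r)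

def nSrc (I : Inst) : Node I := Sum.inl 0
def nSink (I : Inst) : Node I := Sum.inl 1
def nQ (I : Inst) : Node I := Sum.inl 2
def nGrp (I : Inst) (u : Finset I.T) : Node I := Sum.inr (Sum.inl u)
def nTyp (I : Inst) (t : Option I.T) : Node I := Sum.inr (Sum.inr (Sum.inl t))
def nRnk (I : Inst) (t : Option I.T) (i : Fin I.r) : Node I :=
  Sum.inr (Sum.inr (Sum.inr (t, i)))

/-- Quotas including the general type: `η_{t₀}^r = q` and `η_{t₀}^j = 0` for `j < r`. -/
def ηgen (I : Inst) (t : Option I.T) (j : ℕ) : ℕ :=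
  match t with
  | some t => I.η t j
  | none => if j = I.r then I.q else 0

/-- Capacities of the flow network (capacity `0` = no edge). -/
def cap (I : Inst) : Node I → Node I → ℕ := fun x y =>
  match x, y with
  | Sum.inl a, Sum.inl b => if a = 2 ∧ b = 1 then I.q else 0
  | Sum.inl a, Sum.inr (Sum.inl u) => if a = 0 then (Su I u).card else 0
  | Sum.inr (Sum.inl u), Sum.inr (Sum.inr (Sum.inl (some t))) =>
      ((Su I u).filter (fun s => t ∈ I.τ s)).card
  | Sum.inr (Sum.inl u), Sum.inr (Sum.inr (Sum.inl none)) => (Su I u).card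
  | Sum.inr (Sum.inr (Sum.inl t)), Sum.inr (Sum.inr (Sum.inr (t', i))) =>
      if t = t' then ηgen I t' ((i : ℕ) + 1) else 0
  | Sum.inr (Sum.inr (Sum.inr (t, i))), Sum.inl a =>
      if a = 2 then ηgen I t ((i : ℕ) + 1) else 0
  | _, _ => 0

/-- Costs of the flow network: the edge `t → t^i` has cost equal to the rank
`i+1`; all other edges have cost `0`. -/
def cost (I : Inst) : Node I → Node I → ℕ := fun x y =>
  match x, y with
  | Sum.inr (Sum.inr (Sum.inl t)), Sum.inr (Sum.inr (Sum.inr (t', i))) =>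
      if t = t' then (i : ℕ) + 1 else 0
  | _, _ => 0

/-- A flow: nonnegative, within capacities, and conserved at every node other
than the source and the sink. -/
def IsFlow (I : Inst) (f : Node I → Node I → ℝ) : Prop :=
  (∀ x y, 0 ≤ f x y) ∧ (∀ x y, f x y ≤ (cap I x y : ℝ)) ∧
  (∀ x : Node I, x ≠ nSrc I → x ≠ nSink I → (∑ y, f y x) = ∑ y, f x y)

/-- The value of a flow: `Σ_u f(a, u)`. -/
noncomputable def flowVal (I : Inst) (f : Node I → Node I → ℝ) : ℝ :=
  ∑ u : Finset I.T, f (nSrc I) (nGrp I u)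

/-- The cost of a flow: `Σ_e cost(e) · f(e)`. -/
noncomputable def flowCost (I : Inst) (f : Node I → Node I → ℝ) : ℝ :=
  ∑ x : Node I, ∑ y : Node I, (cost I x y : ℝ) * f x y

/-- A maximum flow. -/
def IsMaxFlow (I : Inst) (f : Node I → Node I → ℝ) : Prop :=
  IsFlow I f ∧ ∀ g, IsFlow I g → flowVal I g ≤ flowVal I f

/-- A minimum-cost maximum flow. -/
def IsMinCostMaxFlow (I : Inst) (f : Node I → Node I → ℝ) : Prop :=
  IsMaxFlow I f ∧ ∀ g, IsMaxFlow I g → flowCost I f ≤ flowCost I g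

/-- The flow `f_M` induced by a matching `M`. -/
noncomputable def inducedFlow (I : Inst) (M : Finset (I.S × SeatT I)) :
    Node I → Node I → ℝ := fun x y =>
  match x, y with
  | Sum.inl a, Sum.inl b => if a = 2 ∧ b = 1 then (M.card : ℝ) else 0
  | Sum.inl a, Sum.inr (Sum.inl u) => if a = 0 then (Mu I M u : ℝ) else 0
  | Sum.inr (Sum.inl u), Sum.inr (Sum.inr (Sum.inl t)) =>
      ((M.filter (fun e => I.τ e.1 = u ∧ seatType I e.2 = t)).card : ℝ)
  | Sum.inr (Sum.inr (Sum.inl t)), Sum.inr (Sum.inr (Sum.inr (t', i))) =>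
      if t = t' then
        ((M.filter (fun e => seatType I e.2 = t ∧ seatRank I e.2 = (i : ℕ) + 1)).card : ℝ)
      else 0
  | Sum.inr (Sum.inr (Sum.inr (t, i))), Sum.inl a =>
      if a = 2 then
        ((M.filter (fun e => seatType I e.2 = t ∧ seatRank I e.2 = (i : ℕ) + 1)).card : ℝ)
      else 0
  | _, _ => 0

/-! ### Alternating and augmenting paths -/

/-- The edge set of a path encoded by its list of students `a₀,…` and list of
seats `v₀,…` (edges `(aₖ, vₖ)` and `(aₖ₊₁, vₖ)`). -/
def edgesOf (I : Inst) (students : List I.S) (seats : List (SeatT I)) :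
    Finset (I.S × SeatT I) :=
  (students.zip seats).toFinset ∪ (students.tail.zip seats).toFinset

/-- Symmetric difference `M ⊕ P = (M \ P) ∪ (P \ M)`. -/
def symmDiffM (I : Inst) (M P : Finset (I.S × SeatT I)) : Finset (I.S × SeatT I) :=
  (M \ P) ∪ (P \ M)

/-- An alternating path w.r.t. `M` from an uncovered student to a covered student:
students `a₀, …, aₙ` and seats `v₀, …, vₙ₋₁`, with `(aₖ, vₖ) ∉ M` edges of `G`
and `(aₖ₊₁, vₖ) ∈ M`. -/
structure AltPath (I : Inst) (M : Finset (I.S × SeatT I)) where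
  students : List I.S
  seats : List (SeatT I)
  len : students.length = seats.length + 1
  nodupS : students.Nodup
  nodupV : seats.Nodup
  notM : ∀ e ∈ students.zip seats, e ∉ M ∧ SeatValid I e.2 ∧ EdgeOK I e.1 e.2
  inM : ∀ e ∈ students.tail.zip seats, e ∈ M

/-- The edge set of an alternating path. -/
def AltPath.edges {I : Inst} {M : Finset (I.S × SeatT I)} (P : AltPath I M) :
    Finset (I.S × SeatT I) :=
  edgesOf I P.students P.seats

/-- An augmenting path w.r.t. `M` from an uncovered student to an uncovered seat:
students `a₀, …, aₙ` and seats `v₀, …, vₙ`, with `(aₖ, vₖ) ∉ M` edges of `G`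
and `(aₖ₊₁, vₖ) ∈ M`. -/
structure AugPath (I : Inst) (M : Finset (I.S × SeatT I)) where
  students : List I.S
  seats : List (SeatT I)
  len : students.length = seats.length
  nodupS : students.Nodup
  nodupV : seats.Nodup
  notM : ∀ e ∈ students.zip seats, e ∉ M ∧ SeatValid I e.2 ∧ EdgeOK I e.1 e.2
  inM : ∀ e ∈ students.tail.zip seats, e ∈ M

/-- The edge set of an augmenting path. -/
def AugPath.edges {I : Inst} {M : Finset (I.S × SeatT I)} (P : AugPath I M) :
    Finset (I.S × SeatT I) :=
  edgesOf I P.students P.seats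

/-- The instance obtained from `I` by restricting the student set to `X`. -/
@[reducible] def restrict (I : Inst) (X : Finset I.S) : Inst :=
  { S := {s : I.S // s ∈ X}
    T := I.T
    fS := inferInstance
    dS := inferInstance
    lS := inferInstance
    fT := I.fT
    dT := I.dT
    q := I.q
    qpos := I.qpos
    r := I.r
    τ := fun s => I.τ s.1
    η := I.η }

/-! ### Auxiliary lemmas for the proof -/

section Aux

variable (I : Inst)

/-- A finite superset of all edges appearing in any matching. -/
noncomputable def bigE : Finset (I.S × SeatT I) :=
  Finset.univ ×ˢ ((Finset.univ : Finset (Option I.T)) ×ˢ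
    (Finset.range (I.r+1) ×ˢ
      Finset.range (I.q + ∑ t : I.T, ∑ j ∈ Finset.range (I.r+1), I.η t j)))

lemma matching_subset_bigE {M : Finset (I.S × SeatT I)} (h : IsMatching I M) :
    M ⊆ bigE I := by
  intro e he
  obtain ⟨hv, _⟩ := h.1 e he
  obtain ⟨s, o, j, i⟩ := e
  simp only [bigE, Finset.mem_product, Finset.mem_univ, Finset.mem_range, true_and]
  cases o with
  | some t =>
    simp only [SeatValid] at hv
    obtain ⟨h1, h2, h3⟩ := hv
    refine ⟨by omega, ?_⟩
    have ht : I.η t j ≤ ∑ j' ∈ Finset.range (I.r+1), I.η t j' :=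
      Finset.single_le_sum (fun _ _ => Nat.zero_le _) (Finset.mem_range.2 (by omega))
    have ht2 : (∑ j' ∈ Finset.range (I.r+1), I.η t j')
        ≤ ∑ t' : I.T, ∑ j' ∈ Finset.range (I.r+1), I.η t' j' :=
      Finset.single_le_sum (f := fun t' => ∑ j' ∈ Finset.range (I.r+1), I.η t' j')
        (fun _ _ => Nat.zero_le _) (Finset.mem_univ t)
    omega
  | none =>
    simp only [SeatValid] at hv
    obtain ⟨h1, h2⟩ := hv
    exact ⟨by omega, by omega⟩

lemma isMatching_empty : IsMatching I ∅ := by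
  refine ⟨?_, ?_, ?_⟩ <;> intro e he <;> simp at he

lemma sig_le_card (M : Finset (I.S × SeatT I)) (i : ℕ) : sig I M i ≤ M.card :=
  Finset.card_filter_le _ _

/-- Lexicographic key for signatures. -/
def keyF (M : Finset (I.S × SeatT I)) : ℕ :=
  ∑ i ∈ Finset.range I.r, sig I M (I.r - i) * (I.q+1)^i

lemma geom_aux (q : ℕ) : ∀ m : ℕ, q * ∑ i ∈ Finset.range m, (q+1)^i + 1 = (q+1)^m := by
  intro m
  induction m with
  | zero => simp
  | succ n ih =>
    rw [Finset.sum_range_succ, pow_succ]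
    nlinarith [ih]

lemma keyF_lt {M M' : Finset (I.S × SeatT I)}
    (hb : ∀ i, sig I M i ≤ I.q) (h : SigLT I M M') : keyF I M < keyF I M' := by
  obtain ⟨k, hk1, hkr, hpre, hlt⟩ := h
  set p : ℕ := I.q + 1 with hp
  set m : ℕ := I.r - k with hm
  have hgeom : I.q * ∑ i ∈ Finset.range m, p^i + 1 = p^m := by
    rw [hp]; exact geom_aux I.q m
  have hmr : m < I.r := by omega
  have hrm : I.r - m = k := by omega
  have hsplit : ∀ N : Finset (I.S × SeatT I),
      keyF I N = (∑ i ∈ Finset.range m, sig I N (I.r - i) * p^i)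
        + (sig I N k * p^m + ∑ i ∈ Finset.Ico (m+1) I.r, sig I N (I.r - i) * p^i) := by
    intro N
    rw [keyF, Finset.range_eq_Ico,
      ← Finset.sum_Ico_consecutive (fun i => sig I N (I.r - i) * p^i)
        (Nat.zero_le m) (le_of_lt hmr),
      Finset.sum_eq_sum_Ico_succ_bot hmr, hrm, ← Finset.range_eq_Ico]
  have hR : (∑ i ∈ Finset.Ico (m+1) I.r, sig I M (I.r - i) * p^i)
      = ∑ i ∈ Finset.Ico (m+1) I.r, sig I M' (I.r - i) * p^i := by
    refine Finset.sum_congr rfl fun i hi => ?_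
    rw [Finset.mem_Ico] at hi
    rw [hpre (I.r - i) (by omega) (by omega)]
  have hA : (∑ i ∈ Finset.range m, sig I M (I.r - i) * p^i) < p^m := by
    have h1 : (∑ i ∈ Finset.range m, sig I M (I.r - i) * p^i)
        ≤ ∑ i ∈ Finset.range m, I.q * p^i :=
      Finset.sum_le_sum fun i _ => Nat.mul_le_mul_right _ (hb _)
    rw [← Finset.mul_sum] at h1
    omega
  rw [hsplit M, hsplit M', hR]
  have hmul : sig I M k * p^m + p^m ≤ sig I M' k * p^m := by
    have h3 := Nat.mul_le_mul_right (p^m) hlt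
    rw [Nat.succ_mul] at h3
    exact h3
  omega

lemma exists_balancedRep : ∃ M, BalancedRep I M := by
  classical
  -- all matchings of size ≤ q
  set C0 : Finset (Finset (I.S × SeatT I)) :=
    (bigE I).powerset.filter (fun M => IsMatching I M ∧ M.card ≤ I.q) with hC0
  have hmemC0 : ∀ M, M ∈ C0 ↔ IsMatching I M ∧ M.card ≤ I.q := by
    intro M
    simp only [hC0, Finset.mem_filter, Finset.mem_powerset]
    constructor
    · rintro ⟨_, h⟩; exact h
    · intro h; exact ⟨matching_subset_bigE I h.1, h⟩
  have hne : C0.Nonempty :=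
    ⟨∅, (hmemC0 ∅).2 ⟨isMatching_empty I, by simp⟩⟩
  obtain ⟨M₀, hM₀C, hM₀max⟩ := Finset.exists_max_image C0 (keyF I) hne
  have hM₀ := (hmemC0 M₀).1 hM₀C
  have hrm : RankMaximal I M₀ := by
    refine ⟨hM₀.1, hM₀.2, fun M' hM' hq' hsig => ?_⟩
    have hb : ∀ i, sig I M₀ i ≤ I.q := fun i => le_trans (sig_le_card I M₀ i) hM₀.2
    have hlt := keyF_lt I hb hsig
    have hle := hM₀max M' ((hmemC0 M').2 ⟨hM', hq'⟩)
    omega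
  -- rank-maximal matchings
  set C1 : Finset (Finset (I.S × SeatT I)) :=
    (bigE I).powerset.filter (fun M => RankMaximal I M) with hC1
  have hmemC1 : ∀ M, M ∈ C1 ↔ RankMaximal I M := by
    intro M
    simp only [hC1, Finset.mem_filter, Finset.mem_powerset]
    constructor
    · rintro ⟨_, h⟩; exact h
    · intro h; exact ⟨matching_subset_bigE I h.1, h⟩
  obtain ⟨Ms, hMsC, hMsmax⟩ :=
    Finset.exists_max_image C1 (minRatio I) ⟨M₀, (hmemC1 M₀).2 hrm⟩
  exact ⟨Ms, (hmemC1 Ms).1 hMsC, fun M' h' => hMsmax M' ((hmemC1 M').2 h')⟩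

/-- The greedy step function. -/
noncomputable def gstep : Finset I.S → I.S → Finset I.S := fun A s =>
  if ∃ M, BalancedRep I M ∧ insert s A ⊆ covered I M then insert s A else A

lemma subset_gstep (A : Finset I.S) (s : I.S) : A ⊆ gstep I A s := by
  unfold gstep
  split
  · exact Finset.subset_insert s A
  · exact le_refl A

lemma subset_foldl : ∀ (l : List I.S) (A : Finset I.S), A ⊆ l.foldl (gstep I) A := by
  intro l
  induction l with
  | nil => intro A; exact le_refl A
  | cons x l ih =>
    intro A
    exact le_trans (subset_gstep I A x) (ih (gstep I A x))

lemma foldl_invariant : ∀ (l : List I.S) (A : Finset I.S),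
    (∃ M, BalancedRep I M ∧ A ⊆ covered I M) →
    ∃ M, BalancedRep I M ∧ l.foldl (gstep I) A ⊆ covered I M := by
  intro l
  induction l with
  | nil => intro A h; exact h
  | cons x l ih =>
    intro A h
    refine ih (gstep I A x) ?_
    unfold gstep
    split
    · next hc => exact hc
    · exact h

lemma covered_mem_foldl {M : Finset (I.S × SeatT I)} (hM : BalancedRep I M) :
    ∀ (l : List I.S) (A : Finset I.S),
    l.foldl (gstep I) A ⊆ covered I M →
    ∀ s, s ∈ covered I M → s ∈ l → s ∈ l.foldl (gstep I) A := by
  intro l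
  induction l with
  | nil => intro A _ s _ hs; simp at hs
  | cons x l ih =>
    intro A hsub s hscov hsl
    rcases List.mem_cons.1 hsl with heq | hmem
    · subst heq
      have hcond : ∃ M', BalancedRep I M' ∧ insert s A ⊆ covered I M' := by
        refine ⟨M, hM, ?_⟩
        intro y hy
        rcases Finset.mem_insert.1 hy with rfl | hyA
        · exact hscov
        · exact hsub (subset_foldl I l (gstep I A s) (subset_gstep I A s hyA))
      refine subset_foldl I l (gstep I A s) ?_
      show s ∈ gstep I A s
      unfold gstep
      rw [if_pos hcond]
      exact Finset.mem_insert_self s A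
    · exact ih (gstep I A x) hsub s hscov hmem

end Aux

/-- `Ch*(I)` satisfies maximal diversity and balanced representation:
some rank-maximal matching of size at most `q` attaining balanced representation
covers exactly the students of `Ch*(I)`. -/
theorem chStar_maxDiversity_balanced (I : Inst) :
    ∃ M : Finset (I.S × SeatT I), BalancedRep I M ∧ covered I M = ChStar I := by
  classical
  have hCh : ChStar I =
      ((Finset.sort (Finset.univ : Finset I.S) (· ≤ ·)).reverse).foldl (gstep I) ∅ := rfl
  set l := (Finset.sort (Finset.univ : Finset I.S) (· ≤ ·)).reverse with hl
  obtain ⟨M₀, hM₀⟩ := exists_balancedRep I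
  obtain ⟨M, hM, hsub⟩ := foldl_invariant I l ∅ ⟨M₀, hM₀, Finset.empty_subset _⟩
  refine ⟨M, hM, ?_⟩
  rw [hCh]
  apply Finset.Subset.antisymm _ hsub
  intro s hs
  refine covered_mem_foldl I hM l ∅ hsub s hs ?_
  rw [hl, List.mem_reverse, Finset.mem_sort]
  exact Finset.mem_univ s
end

section
/- For every instance I, the greedy choice function output Ch*(I) satisfies justified envy-freeness: there are no students s ∉ Ch*(I) and s' ∈ Ch*(I) with s ≻ s' such that the set (Ch*(I) ∪ {s}) \ {s'} satisfies both maximal diversity and balanced representation. -/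
open Classical

noncomputable def stepG (I : Inst) (A : Finset I.S) (s : I.S) : Finset I.S :=
  if ∃ M, BalancedRep I M ∧ insert s A ⊆ covered I M then insert s A else A

lemma subset_stepG (I : Inst) (A : Finset I.S) (s : I.S) : A ⊆ stepG I A s := by
  unfold stepG; split_ifs
  · exact Finset.subset_insert _ _
  · exact subset_rfl

lemma stepG_subset_insert (I : Inst) (A : Finset I.S) (s : I.S) :
    stepG I A s ⊆ insert s A := by
  unfold stepG; split_ifs
  · exact subset_rfl
  · exact Finset.subset_insert _ _

lemma subset_foldl_stepG (I : Inst) :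
    ∀ (l : List I.S) (A : Finset I.S), A ⊆ l.foldl (stepG I) A := by
  intro l
  induction l with
  | nil => intro A; exact subset_rfl
  | cons a l ih =>
      intro A
      exact (subset_stepG I A a).trans (ih (stepG I A a))

lemma foldl_stepG_subset_union (I : Inst) :
    ∀ (l : List I.S) (A : Finset I.S), l.foldl (stepG I) A ⊆ A ∪ l.toFinset := by
  intro l
  induction l with
  | nil => intro A; simp
  | cons a l ih =>
      intro A
      refine (ih (stepG I A a)).trans ?_
      intro x hx
      rcases Finset.mem_union.1 hx with hx | hx
      · rcases Finset.mem_insert.1 (stepG_subset_insert I A a hx) with rfl | hx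
        · simp
        · exact Finset.mem_union.2 (Or.inl hx)
      · simp [hx]

lemma chStar_eq_foldl (I : Inst) :
    ChStar I = ((Finset.sort (Finset.univ : Finset I.S) (· ≤ ·)).reverse).foldl
      (stepG I) ∅ := rfl

/-- `Ch*(I)` satisfies justified envy-freeness. -/
theorem chStar_JEF (I : Inst) : JEF I (ChStar I) := by
  intro ⟨s, s', hsA, hs'A, hprio, _hMD, hBR⟩
  classical
  set L := ((Finset.sort (Finset.univ : Finset I.S) (· ≤ ·)).reverse) with hLdef
  have hsL : s ∈ L := by
    simp [hLdef, Finset.mem_sort]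
  obtain ⟨l₁, l₂, hL⟩ := List.append_of_mem hsL
  have hpw : L.Pairwise (· ≥ ·) := by
    rw [hLdef, List.pairwise_reverse]
    exact Finset.pairwise_sort _ (· ≤ ·)
  have hge : ∀ x ∈ l₁, x ≥ s := by
    rw [hL] at hpw
    intro x hx
    exact (List.pairwise_append.1 hpw).2.2 x hx s List.mem_cons_self
  set A₁ : Finset I.S := l₁.foldl (stepG I) ∅ with hA₁
  have hfold : ChStar I = l₂.foldl (stepG I) (stepG I A₁ s) := by
    rw [chStar_eq_foldl, ← hLdef, hL, List.foldl_append, List.foldl_cons]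
  by_cases hC : ∃ M, BalancedRep I M ∧ insert s A₁ ⊆ covered I M
  · have hstep : stepG I A₁ s = insert s A₁ := if_pos hC
    have : s ∈ ChStar I := by
      rw [hfold]
      exact subset_foldl_stepG I l₂ _ (hstep ▸ Finset.mem_insert_self s A₁)
    exact hsA this
  · apply hC
    obtain ⟨M, hM, hBsub⟩ := hBR
    refine ⟨M, hM, ?_⟩
    have hstep : stepG I A₁ s = A₁ := if_neg hC
    have hA₁sub : A₁ ⊆ ChStar I := by
      rw [hfold, hstep]
      exact subset_foldl_stepG I l₂ A₁
    have hA₁l₁ : A₁ ⊆ l₁.toFinset := by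
      have := foldl_stepG_subset_union I l₁ ∅
      simpa using this
    have hs' : s' ∉ A₁ := by
      intro h
      exact absurd (hge s' (List.mem_toFinset.1 (hA₁l₁ h))) (not_le.2 hprio)
    intro x hx
    apply hBsub
    rcases Finset.mem_insert.1 hx with rfl | hx
    · refine Finset.mem_sdiff.2 ⟨Finset.mem_insert_self _ _, ?_⟩
      simp only [Finset.mem_singleton]
      intro h; exact absurd hprio (h ▸ lt_irrefl _)
    · refine Finset.mem_sdiff.2 ⟨Finset.mem_insert_of_mem (hA₁sub hx), ?_⟩
      simp only [Finset.mem_singleton]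
      intro h; exact hs' (h ▸ hx)
end

section
/- Let I be an instance with |S| ≥ q whose crucial vector δ* satisfies Σ_{u∈U} δ*_u = q. Then every subset S* ⊆ S with |S*| ≤ q that satisfies non-wastefulness, maximal diversity, balanced representation, and justified envy-freeness consists, for each group u ∈ U, of exactly the δ*_u highest-priority (with respect to ≻) students of S_u. -/
open Classical

/-! ### Auxiliary lemmas -/

section Swap

variable (I : Inst)

lemma edgeOK_congr {a b : I.S} (h : I.τ a = I.τ b) {v : SeatT I}
    (hv : EdgeOK I a v) : EdgeOK I b v := by
  unfold EdgeOK at *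
  rcases hv' : v.1 with _ | t
  · simp [hv']
  · rw [hv'] at hv; simpa [hv', ← h] using hv

/-- Replace student `s'` by `s` in an edge. -/
def swapF (s s' : I.S) : I.S × SeatT I → I.S × SeatT I :=
  fun e => if e.1 = s' then (s, e.2) else e

lemma swapF_snd (s s' : I.S) (e : I.S × SeatT I) : (swapF I s s' e).2 = e.2 := by
  unfold swapF; split <;> rfl

lemma swapF_fst (s s' : I.S) (e : I.S × SeatT I) :
    (swapF I s s' e).1 = if e.1 = s' then s else e.1 := by
  unfold swapF; split <;> simp_all

variable (M : Finset (I.S × SeatT I)) (s s' : I.S)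

lemma swap_injOn (hM : IsMatching I M) (hs : s ∉ covered I M) :
    Set.InjOn (swapF I s s') M := by
  intro e he e' he' hee
  by_cases h1 : e.1 = s' <;> by_cases h2 : e'.1 = s'
  · exact hM.2.1 e he e' he' (h1.trans h2.symm)
  · exfalso
    apply hs
    have : (swapF I s s' e).1 = s := by rw [swapF_fst]; simp [h1]
    have h3 : e'.1 = s := by rw [hee] at this; rw [swapF_fst] at this; simpa [h2] using this
    exact Finset.mem_image.2 ⟨e', he', h3⟩
  · exfalso
    apply hs
    have : (swapF I s s' e').1 = s := by rw [swapF_fst]; simp [h2]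
    have h3 : e.1 = s := by rw [← hee] at this; rw [swapF_fst] at this; simpa [h1] using this
    exact Finset.mem_image.2 ⟨e, he, h3⟩
  · simpa [swapF, h1, h2] using hee

lemma swap_card (hM : IsMatching I M) (hs : s ∉ covered I M) :
    (M.image (swapF I s s')).card = M.card :=
  Finset.card_image_of_injOn (swap_injOn I M s s' hM hs)

lemma swap_isMatching (hM : IsMatching I M) (hτ : I.τ s = I.τ s')
    (hs : s ∉ covered I M) : IsMatching I (M.image (swapF I s s')) := by
  refine ⟨?_, ?_, ?_⟩
  · rintro e he
    obtain ⟨e₀, he₀, rfl⟩ := Finset.mem_image.1 he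
    refine ⟨by rw [swapF_snd]; exact (hM.1 e₀ he₀).1, ?_⟩
    by_cases h1 : e₀.1 = s'
    · have : EdgeOK I s' e₀.2 := by rw [← h1]; exact (hM.1 e₀ he₀).2
      have h2 : EdgeOK I s e₀.2 := edgeOK_congr I hτ.symm this
      simpa [swapF, h1] using h2
    · simpa [swapF, h1] using (hM.1 e₀ he₀).2
  · rintro e he e' he' h
    obtain ⟨e₀, he₀, rfl⟩ := Finset.mem_image.1 he
    obtain ⟨e₁, he₁, rfl⟩ := Finset.mem_image.1 he'
    rw [swapF_fst, swapF_fst] at h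
    by_cases h1 : e₀.1 = s' <;> by_cases h2 : e₁.1 = s' <;> simp [h1, h2] at h
    · rw [hM.2.1 e₀ he₀ e₁ he₁ (h1.trans h2.symm)]
    · exact absurd (Finset.mem_image.2 ⟨e₁, he₁, h.symm⟩) hs
    · exact absurd (Finset.mem_image.2 ⟨e₀, he₀, h⟩) hs
    · rw [hM.2.1 e₀ he₀ e₁ he₁ h]
  · rintro e he e' he' h
    obtain ⟨e₀, he₀, rfl⟩ := Finset.mem_image.1 he
    obtain ⟨e₁, he₁, rfl⟩ := Finset.mem_image.1 he'
    rw [swapF_snd, swapF_snd] at h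
    rw [hM.2.2 e₀ he₀ e₁ he₁ h]

lemma swap_sig (hM : IsMatching I M) (hs : s ∉ covered I M) (i : ℕ) :
    sig I (M.image (swapF I s s')) i = sig I M i := by
  unfold sig
  rw [Finset.filter_image]
  rw [Finset.card_image_of_injOn ((swap_injOn I M s s' hM hs).mono (by
    intro x hx; exact Finset.mem_coe.2 (Finset.mem_filter.1 hx).1))]
  congr 1
  apply Finset.filter_congr
  intro e _
  simp [swapF_snd]

lemma swap_covered (hM : IsMatching I M) (hs : s ∉ covered I M)
    (hs' : s' ∈ covered I M) :
    covered I (M.image (swapF I s s')) = insert s ((covered I M).erase s') := by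
  ext x
  constructor
  · intro hx
    obtain ⟨e, he, rfl⟩ := Finset.mem_image.1 hx
    obtain ⟨e₀, he₀, rfl⟩ := Finset.mem_image.1 he
    rw [swapF_fst]
    by_cases h1 : e₀.1 = s'
    · simp [h1]
    · rw [if_neg h1]
      refine Finset.mem_insert_of_mem (Finset.mem_erase.2 ⟨h1, ?_⟩)
      exact Finset.mem_image.2 ⟨e₀, he₀, rfl⟩
  · intro hx
    rcases Finset.mem_insert.1 hx with h | hx
    · obtain ⟨e₂, he₂, h2⟩ := Finset.mem_image.1 hs'
      refine Finset.mem_image.2 ⟨swapF I s s' e₂, Finset.mem_image_of_mem _ he₂, ?_⟩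
      rw [swapF_fst, h]; simp [h2]
    · obtain ⟨hne, hx⟩ := Finset.mem_erase.1 hx
      obtain ⟨e, he, rfl⟩ := Finset.mem_image.1 hx
      refine Finset.mem_image.2 ⟨swapF I s s' e, Finset.mem_image_of_mem _ he, ?_⟩
      rw [swapF_fst]; simp [hne]

lemma swap_Mu (hM : IsMatching I M) (hτ : I.τ s = I.τ s')
    (hs : s ∉ covered I M) (hs' : s' ∈ covered I M) (u : Finset I.T) :
    Mu I (M.image (swapF I s s')) u = Mu I M u := by
  unfold Mu
  rw [swap_covered I M s s' hM hs hs']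
  by_cases hu : I.τ s = u
  · have hτs' : I.τ s' = u := by rw [← hτ]; exact hu
    rw [Finset.filter_insert, if_pos hu, Finset.filter_erase]
    have hsmem : s ∉ ((covered I M).filter (fun x => I.τ x = u)).erase s' := by
      intro h
      exact hs (Finset.mem_filter.1 (Finset.mem_of_mem_erase h)).1
    rw [Finset.card_insert_of_notMem hsmem]
    have hs'mem : s' ∈ (covered I M).filter (fun x => I.τ x = u) :=
      Finset.mem_filter.2 ⟨hs', hτs'⟩
    rw [Finset.card_erase_of_mem hs'mem]
    exact Nat.sub_add_cancel (Finset.card_pos.2 ⟨s', hs'mem⟩)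
  · have hτs' : I.τ s' ≠ u := by rw [← hτ]; exact hu
    rw [Finset.filter_insert, if_neg hu, Finset.filter_erase,
      Finset.erase_eq_of_notMem
        (fun h : s' ∈ (covered I M).filter (fun x => I.τ x = u) =>
          hτs' (Finset.mem_filter.1 h).2)]

lemma swap_rankMaximal (hM : RankMaximal I M) (hτ : I.τ s = I.τ s')
    (hs : s ∉ covered I M) : RankMaximal I (M.image (swapF I s s')) := by
  refine ⟨swap_isMatching I M s s' hM.1 hτ hs, ?_, ?_⟩
  · rw [swap_card I M s s' hM.1 hs]; exact hM.2.1
  · intro M'' h1 h2 hlt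
    apply hM.2.2 M'' h1 h2
    obtain ⟨k, hk1, hk2, hall, hks⟩ := hlt
    refine ⟨k, hk1, hk2, fun i hi1 hi2 => ?_, ?_⟩
    · rw [← swap_sig I M s s' hM.1 hs i]; exact hall i hi1 hi2
    · rw [← swap_sig I M s s' hM.1 hs k]; exact hks

lemma swap_minRatio (hM : IsMatching I M) (hτ : I.τ s = I.τ s')
    (hs : s ∉ covered I M) (hs' : s' ∈ covered I M) :
    minRatio I (M.image (swapF I s s')) = minRatio I M := by
  unfold minRatio
  congr 1
  apply Finset.image_congr
  intro u _
  simp only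
  rw [swap_Mu I M s s' hM hτ hs hs']

lemma swap_balancedRep (hM : BalancedRep I M) (hτ : I.τ s = I.τ s')
    (hs : s ∉ covered I M) (hs' : s' ∈ covered I M) :
    BalancedRep I (M.image (swapF I s s')) := by
  refine ⟨swap_rankMaximal I M s s' hM.1 hτ hs, fun M'' h'' => ?_⟩
  rw [swap_minRatio I M s s' hM.1.1 hτ hs hs']
  exact hM.2 M'' h''

end Swap

section Count

variable (I : Inst)

lemma minRatio_spec (hne : (groups I).Nonempty) (M : Finset (I.S × SeatT I)) :
    ∃ u ∈ groups I,
      minRatio I M = (((Mu I M u : ℚ) / ((Su I u).card : ℚ) : ℚ) : WithTop ℚ) ∧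
      ∀ u' ∈ groups I, (Mu I M u : ℚ) / ((Su I u).card : ℚ) ≤
        (Mu I M u' : ℚ) / ((Su I u').card : ℚ) := by
  obtain ⟨u, hu, hmin⟩ := Finset.exists_min_image (groups I)
    (fun u => (Mu I M u : ℚ) / ((Su I u).card : ℚ)) hne
  refine ⟨u, hu, ?_, hmin⟩
  unfold minRatio
  apply le_antisymm
  · exact Finset.min_le (Finset.mem_image_of_mem _ hu)
  · apply Finset.le_min
    intro b hb
    obtain ⟨u', hu', rfl⟩ := Finset.mem_image.1 hb
    exact_mod_cast hmin u' hu'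

lemma Mu_le_cardS (M : Finset (I.S × SeatT I)) (u : Finset I.T) :
    Mu I M u ≤ Fintype.card I.S := by
  unfold Mu
  exact le_trans (Finset.card_filter_le _ _) (Finset.card_le_univ _)

lemma alphaQ_eq_of_balanced (hne : (groups I).Nonempty)
    (M : Finset (I.S × SeatT I)) (hM : BalancedRep I M) :
    ∃ v : ℚ, minRatio I M = (v : WithTop ℚ) ∧ alphaQ I = v ∧
      ∀ u ∈ groups I, v ≤ (Mu I M u : ℚ) / ((Su I u).card : ℚ) := by
  obtain ⟨u, hu, hmineq, hminle⟩ := minRatio_spec I hne M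
  refine ⟨(Mu I M u : ℚ) / ((Su I u).card : ℚ), hmineq, ?_, hminle⟩
  set v := (Mu I M u : ℚ) / ((Su I u).card : ℚ) with hv
  set cands : Finset ℚ :=
    ((Finset.Icc 0 (Fintype.card I.S)) ×ˢ groups I).image
      (fun p => (p.1 : ℚ) / ((Su I p.2).card : ℚ)) with hcands
  set F := cands.filter
      (fun x : ℚ => ∃ M, RankMaximal I M ∧ minRatio I M = (x : WithTop ℚ)) with hF
  have hvc : v ∈ cands := Finset.mem_image.2 ⟨(Mu I M u, u),
    Finset.mem_product.2 ⟨Finset.mem_Icc.2 ⟨Nat.zero_le _, Mu_le_cardS I M u⟩, hu⟩, rfl⟩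
  have hvF : v ∈ F := Finset.mem_filter.2 ⟨hvc, ⟨M, hM.1, hmineq⟩⟩
  have hFne : F.Nonempty := ⟨v, hvF⟩
  have halpha : alphaQ I = F.max' hFne := by
    have h1 : alphaQ I = WithBot.unbotD 0 F.max := rfl
    rw [h1, ← Finset.coe_max' hFne, WithBot.unbotD_coe]
  rw [halpha]
  apply le_antisymm
  · have hm := Finset.max'_mem F hFne
    obtain ⟨hmc, M₂, hM₂, hmin₂⟩ := Finset.mem_filter.1 hm
    have := hM.2 M₂ hM₂
    rw [hmin₂, hmineq] at this
    exact_mod_cast this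
  · exact Finset.le_max' F v hvF

lemma Su_card_pos (u : Finset I.T) (hu : u ∈ groups I) : 0 < (Su I u).card := by
  obtain ⟨s, _, hs⟩ := Finset.mem_image.1 hu
  exact Finset.card_pos.2 ⟨s, Finset.mem_filter.2 ⟨Finset.mem_univ s, hs⟩⟩

lemma deltaStar_le_Mu (hne : (groups I).Nonempty) (M : Finset (I.S × SeatT I))
    (hM : BalancedRep I M) (u : Finset I.T) (hu : u ∈ groups I) :
    deltaStar I u ≤ Mu I M u := by
  obtain ⟨v, _, hv2, hv3⟩ := alphaQ_eq_of_balanced I hne M hM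
  unfold deltaStar
  rw [hv2]
  have hpos : (0 : ℚ) < ((Su I u).card : ℚ) := by
    exact_mod_cast Su_card_pos I u hu
  have hle : v * ((Su I u).card : ℚ) ≤ (Mu I M u : ℚ) := by
    rw [← le_div_iff₀ hpos]; exact hv3 u hu
  calc ⌊v * ((Su I u).card : ℚ)⌋₊ ≤ ⌊(Mu I M u : ℚ)⌋₊ := Nat.floor_mono hle
    _ = Mu I M u := Nat.floor_natCast _

lemma covered_card_eq_sum (M : Finset (I.S × SeatT I)) :
    (covered I M).card = ∑ u ∈ groups I, Mu I M u := by
  unfold Mu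
  exact Finset.card_eq_sum_card_fiberwise
    (fun s _ => Finset.mem_image.2 ⟨s, Finset.mem_univ s, rfl⟩)

end Count

/-- if `|S| ≥ q` and `Σ_{u∈U} δ*_u = q`, then every subset `S* ⊆ S`
with `|S*| ≤ q` satisfying the four properties consists, for each group `u`, of
exactly the `δ*_u` highest-priority students of `S_u`. -/
theorem good_set_eq_topK (I : Inst) (hS : I.q ≤ Fintype.card I.S)
    (hsum : ∑ u ∈ groups I, deltaStar I u = I.q)
    (A : Finset I.S) (hq : A.card ≤ I.q)
    (h1 : NonWasteful I A) (h2 : MaxDiversity I A)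
    (h3 : BalancedRepSet I A) (h4 : JEF I A) :
    ∀ u ∈ groups I, A.filter (fun s => I.τ s = u) = topK I (Su I u) (deltaStar I u) := by
  intro u hu
  have hgne : (groups I).Nonempty := ⟨u, hu⟩
  obtain ⟨M, hMbal, hAM⟩ := h3
  have hAcard : A.card = I.q := h1.trans (min_eq_right hS)
  have hle : ∀ u' ∈ groups I, deltaStar I u' ≤ Mu I M u' :=
    fun u' hu' => deltaStar_le_Mu I hgne M hMbal u' hu'
  have hsum2 : (covered I M).card = ∑ u' ∈ groups I, Mu I M u' :=
    covered_card_eq_sum I M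
  have hcovq : (covered I M).card ≤ I.q :=
    le_trans Finset.card_image_le hMbal.1.2.1
  have hsble : I.q ≤ ∑ u' ∈ groups I, Mu I M u' := by
    calc I.q = ∑ u' ∈ groups I, deltaStar I u' := hsum.symm
      _ ≤ ∑ u' ∈ groups I, Mu I M u' := Finset.sum_le_sum hle
  have hcov_eq : (covered I M).card = I.q :=
    le_antisymm hcovq (hsble.trans_eq hsum2.symm)
  have hsumEq : ∑ u' ∈ groups I, Mu I M u' = ∑ u' ∈ groups I, deltaStar I u' := by
    rw [← hsum2, hcov_eq, hsum]
  have hMuEq : ∀ u' ∈ groups I, Mu I M u' = deltaStar I u' := by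
    intro u' hu'
    by_contra hne'
    have hlt : ∑ u'' ∈ groups I, deltaStar I u'' < ∑ u'' ∈ groups I, Mu I M u'' :=
      Finset.sum_lt_sum hle
        ⟨u', hu', lt_of_le_of_ne (hle u' hu') (Ne.symm hne')⟩
    omega
  have hA_eq : A = covered I M :=
    Finset.eq_of_subset_of_card_le hAM (by rw [hcov_eq, hAcard])
  set B := A.filter (fun s => I.τ s = u) with hB
  set C := Su I u with hC
  have hBC : B ⊆ C := fun x hx =>
    Finset.mem_filter.2 ⟨Finset.mem_univ x, (Finset.mem_filter.1 hx).2⟩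
  have hBcard : B.card = deltaStar I u := by
    have h5 : Mu I M u = B.card := by unfold Mu; rw [← hA_eq]
    rw [← h5, hMuEq u hu]
  -- the JEF-based top property
  have htop : ∀ x ∈ C, x ∉ B → ∀ y ∈ B, x < y := by
    intro x hxC hxB y hyB
    have hτx : I.τ x = u := (Finset.mem_filter.1 hxC).2
    obtain ⟨hyA, hτy⟩ := Finset.mem_filter.1 hyB
    have hxA : x ∉ A := fun h => hxB (Finset.mem_filter.2 ⟨h, hτx⟩)
    have hxy : x ≠ y := fun h => hxA (h ▸ hyA)
    by_contra hnot
    have hyx : y < x := lt_of_le_of_ne (not_lt.1 hnot) (Ne.symm hxy)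
    -- swap y for x in M
    have hxcov : x ∉ covered I M := hA_eq ▸ hxA
    have hycov : y ∈ covered I M := hA_eq ▸ hyA
    have hττ : I.τ x = I.τ y := hτx.trans hτy.symm
    set M' := M.image (swapF I x y) with hM'
    have hcovM' : covered I M' = insert x A \ {y} := by
      rw [swap_covered I M x y hMbal.1.1 hxcov hycov, ← hA_eq,
        Finset.sdiff_singleton_eq_erase, Finset.erase_insert_of_ne hxy]
    apply h4
    refine ⟨x, y, hxA, hyA, hyx, ?_, ?_⟩
    · exact ⟨M', swap_rankMaximal I M x y hMbal.1 hττ hxcov, hcovM'.le⟩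
    · exact ⟨M', swap_balancedRep I M x y hMbal hττ hxcov hycov, hcovM'.ge⟩
  -- conclude B = topK C (deltaStar I u)
  unfold topK
  apply Finset.Subset.antisymm
  · intro b hb
    refine Finset.mem_filter.2 ⟨hBC hb, ?_⟩
    have hsub : C.filter (fun t => b ≤ t) ⊆ B := by
      intro t ht
      obtain ⟨htC, hbt⟩ := Finset.mem_filter.1 ht
      by_contra htB
      exact absurd hbt (not_le.2 (htop t htC htB b hb))
    calc (C.filter (fun t => b ≤ t)).card ≤ B.card := Finset.card_le_card hsub
      _ = deltaStar I u := hBcard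
  · intro x hx
    obtain ⟨hxC, hxk⟩ := Finset.mem_filter.1 hx
    by_contra hxB
    have hsub : insert x B ⊆ C.filter (fun t => x ≤ t) := by
      intro t ht
      rcases Finset.mem_insert.1 ht with rfl | htB
      · exact Finset.mem_filter.2 ⟨hxC, le_refl _⟩
      · exact Finset.mem_filter.2 ⟨hBC htB, (htop x hxC hxB t htB).le⟩
    have hcard := Finset.card_le_card hsub
    rw [Finset.card_insert_of_notMem hxB, hBcard] at hcard
    omega
end

section
/- The greedy choice function does not satisfy substitutability: there exist an instance I = (S, q, ≻, T, τ, η), a subset Y ⊆ S, and two distinct students s₁, s₂ ∈ S \ Y such that s₂ ∉ Ch*(I|_{Y ∪ {s₂}}) but s₂ ∈ Ch*(I|_{Y ∪ {s₁, s₂}}), where I|_X denotes the instance obtained from I by restricting the student set to X (keeping q, the restriction of ≻ to X, T, τ, and η). A concrete witness: q = 4, a single rank r = 1, two types t₁ and t₂ each with quota η^1 = 4, students s₁₁ ≻ s₁₂ ≻ s₁₃ ≻ s₁₄ ≻ s₁₅ ≻ s₁₆ ≻ s₂₁ ≻ s₂₂ ≻ s₂₃ with τ(s₁ⱼ) = {t₁}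 and τ(s₂ⱼ) = {t₂}; with Y = {s₁₁, s₁₂, s₁₃, s₁₄, s₁₅, s₂₁, s₂₂, s₂₃}, s₁ = s₁₆ and s₂ = s₁₃, one has Ch*(I|_Y) = {s₁₁, s₁₂, s₂₁, s₂₂} (so s₁₃ is rejected) while Ch*(I|_{Y ∪ {s₁₆}}) = {s₁₁, s₁₂, s₁₃, s₂₁} (so s₁₃ is selected). -/
open Classical

/-! ### Auxiliary decidability instances -/

instance (I : Inst) (v : SeatT I) : Decidable (SeatValid I v) :=
  match v with
  | (some t, j, i) => inferInstanceAs (Decidable (1 ≤ j ∧ j ≤ I.r ∧ i < I.η t j))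
  | (none, j, i) => inferInstanceAs (Decidable (j = I.r ∧ i < I.q))

instance (I : Inst) (s : I.S) (v : SeatT I) : Decidable (EdgeOK I s v) :=
  match v with
  | (some t, _, _) => inferInstanceAs (Decidable (t ∈ I.τ s))
  | (none, _, _) => inferInstanceAs (Decidable True)

instance (I : Inst) (M : Finset (I.S × SeatT I)) : Decidable (IsMatching I M) :=
  inferInstanceAs (Decidable ((∀ e ∈ M, SeatValid I e.2 ∧ EdgeOK I e.1 e.2) ∧
    (∀ e ∈ M, ∀ e' ∈ M, e.1 = e'.1 → e = e') ∧
    (∀ e ∈ M, ∀ e' ∈ M, e.2 = e'.2 → e = e')))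

/-! ### Generic lemmas about instances with all quotas zero and a single rank -/

section Generic

variable {J : Inst}

lemma seat_of_valid (hη : ∀ t j, J.η t j = 0) {v : SeatT J} (h : SeatValid J v) :
    v.1 = none ∧ v.2.1 = J.r ∧ v.2.2 < J.q := by
  obtain ⟨t, j, i⟩ := v
  cases t with
  | none => exact ⟨rfl, h.1, h.2⟩
  | some t =>
      have h3 : i < J.η t j := h.2.2
      rw [hη t j] at h3
      omega

lemma covered_card {M : Finset (J.S × SeatT J)} (hM : IsMatching J M) :
    (covered J M).card = M.card :=
  Finset.card_image_of_injOn fun e he e' he' h => hM.2.1 e he e' he' h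

lemma sig_eq_card (hη : ∀ t j, J.η t j = 0) {M : Finset (J.S × SeatT J)}
    (hM : IsMatching J M) : sig J M J.r = M.card := by
  unfold sig
  rw [Finset.filter_true_of_mem]
  intro e he
  exact (seat_of_valid hη (hM.1 e he).1).2.1

lemma rankMax_iff (hη : ∀ t j, J.η t j = 0) (hr : J.r = 1)
    {W : Finset (J.S × SeatT J)} (hW : IsMatching J W) (hWq : W.card = J.q)
    (M : Finset (J.S × SeatT J)) :
    RankMaximal J M ↔ IsMatching J M ∧ M.card = J.q := by
  constructor
  · rintro ⟨hM, hq, hmax⟩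
    refine ⟨hM, le_antisymm hq ?_⟩
    by_contra hc
    refine hmax W hW hWq.le ⟨1, le_refl 1, hr.ge, fun i h1 h2 => absurd h2 (by omega), ?_⟩
    have h1 : sig J M 1 ≤ M.card := Finset.card_filter_le _ _
    have h2 : sig J W 1 = W.card := by rw [← hr]; exact sig_eq_card hη hW
    omega
  · rintro ⟨hM, hq⟩
    refine ⟨hM, hq.le, ?_⟩
    rintro M' hM' hq' ⟨k, hk1, hkr, -, hlt⟩
    rw [hr] at hkr
    have hk : k = 1 := le_antisymm hkr hk1
    subst hk
    have h1 : sig J M 1 = M.card := by rw [← hr]; exact sig_eq_card hη hM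
    have h2 : sig J M' 1 ≤ M'.card := Finset.card_filter_le _ _
    omega

lemma Mu_le_card (M : Finset (J.S × SeatT J)) (u : Finset J.T) :
    Mu J M u ≤ (Su J u).card :=
  Finset.card_le_card fun s hs =>
    Finset.mem_filter.mpr ⟨Finset.mem_univ s, (Finset.mem_filter.mp hs).2⟩

lemma card_le_Mu {M : Finset (J.S × SeatT J)} {u : Finset J.T} {B : Finset J.S}
    (hB : B ⊆ covered J M) (hτ : ∀ s ∈ B, J.τ s = u) : B.card ≤ Mu J M u :=
  Finset.card_le_card fun s hs => Finset.mem_filter.mpr ⟨hB hs, hτ s hs⟩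

lemma Mu_add {M : Finset (J.S × SeatT J)} {u1 u2 : Finset J.T} (hne : u1 ≠ u2)
    (hall : ∀ s : J.S, J.τ s = u1 ∨ J.τ s = u2) :
    Mu J M u1 + Mu J M u2 = (covered J M).card := by
  have hdis : Disjoint ((covered J M).filter (fun s => J.τ s = u1))
      ((covered J M).filter (fun s => J.τ s = u2)) := by
    rw [Finset.disjoint_left]
    intro s h1 h2
    exact hne (by rw [← (Finset.mem_filter.mp h1).2, (Finset.mem_filter.mp h2).2])
  have hunion : (covered J M).filter (fun s => J.τ s = u1) ∪
      (covered J M).filter (fun s => J.τ s = u2) = covered J M := by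
    ext s
    simp only [Finset.mem_union, Finset.mem_filter]
    constructor
    · rintro (⟨h, -⟩ | ⟨h, -⟩) <;> exact h
    · intro h
      rcases hall s with h' | h'
      exacts [Or.inl ⟨h, h'⟩, Or.inr ⟨h, h'⟩]
  unfold Mu
  rw [← Finset.card_union_of_disjoint hdis, hunion]

lemma minRatio_le_ratio {M : Finset (J.S × SeatT J)} {u : Finset J.T}
    (hu : u ∈ groups J) :
    minRatio J M ≤ (((Mu J M u : ℚ) / ((Su J u).card : ℚ) : ℚ) : WithTop ℚ) :=
  Finset.min_le (Finset.mem_image_of_mem _ hu)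

lemma minRatio_eq_of {M : Finset (J.S × SeatT J)} {c : ℚ} {u0 : Finset J.T}
    (hu0 : u0 ∈ groups J)
    (hv : (Mu J M u0 : ℚ) / ((Su J u0).card : ℚ) = c)
    (hall : ∀ u ∈ groups J, c ≤ (Mu J M u : ℚ) / ((Su J u).card : ℚ)) :
    minRatio J M = (c : WithTop ℚ) := by
  refine le_antisymm ?_ ?_
  · exact hv ▸ Finset.min_le (Finset.mem_image_of_mem _ hu0)
  · refine Finset.le_min ?_
    intro b hb
    obtain ⟨u, hu, rfl⟩ := Finset.mem_image.mp hb
    exact WithTop.coe_le_coe.mpr (hall u hu)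

end Generic

/-! ### Generic lemmas about the greedy fold -/

lemma foldl_not_mem {α : Type*} [DecidableEq α] (g : Finset α → α → Finset α)
    (hg : ∀ A s, g A s = A ∨ g A s = insert s A) (x : α) :
    ∀ (l : List α) (A : Finset α), x ∉ A → x ∉ l → x ∉ List.foldl g A l := by
  intro l
  induction l with
  | nil => intro A hA _; simpa using hA
  | cons s l ih =>
      intro A hA hl
      have hxs : x ≠ s := fun h => hl (h ▸ List.mem_cons_self (a := s) (l := l))
      have hxl : x ∉ l := fun h => hl (List.mem_cons_of_mem s h)
      simp only [List.foldl_cons]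
      refine ih _ ?_ hxl
      rcases hg A s with h | h <;> rw [h]
      · exact hA
      · simp only [Finset.mem_insert, not_or]
        exact ⟨hxs, hA⟩

lemma foldl_mem {α : Type*} [DecidableEq α] (g : Finset α → α → Finset α)
    (hg : ∀ A s, g A s = A ∨ g A s = insert s A) (x : α) :
    ∀ (l : List α) (A : Finset α), x ∈ A → x ∈ List.foldl g A l := by
  intro l
  induction l with
  | nil => intro A hA; simpa using hA
  | cons s l ih =>
      intro A hA
      simp only [List.foldl_cons]
      refine ih _ ?_
      rcases hg A s with h | h <;> rw [h]
      · exact hA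
      · exact Finset.mem_insert_of_mem hA

lemma eval_not_mem {α : Type*} [DecidableEq α] (g : Finset α → α → Finset α)
    (x a : α) (l : List α)
    (hg : ∀ A s, g A s = A ∨ g A s = insert s A)
    (h1 : g ∅ a = insert a ∅)
    (h2 : g (insert a ∅) x = insert a ∅)
    (hxa : x ≠ a) (hxl : x ∉ l)
    (l0 : List α) (hL : l0 = a :: x :: l) :
    x ∉ List.foldl g ∅ l0 := by
  subst hL
  simp only [List.foldl_cons, h1, h2]
  refine foldl_not_mem g hg x l _ ?_ hxl
  simp only [Finset.mem_insert, not_or]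
  exact ⟨hxa, Finset.notMem_empty x⟩

lemma eval_mem {α : Type*} [DecidableEq α] (g : Finset α → α → Finset α)
    (x a : α) (l : List α)
    (hg : ∀ A s, g A s = A ∨ g A s = insert s A)
    (h1 : g ∅ a = insert a ∅)
    (h2 : g (insert a ∅) x = insert x (insert a ∅))
    (l0 : List α) (hL : l0 = a :: x :: l) :
    x ∈ List.foldl g ∅ l0 := by
  subst hL
  simp only [List.foldl_cons, h1, h2]
  exact foldl_mem g hg x l _ (Finset.mem_insert_self x _)

lemma sort_univ_eq {α : Type*} [LinearOrder α] [Fintype α] (l : List α)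
    (h1 : List.Pairwise (· ≤ ·) l)
    (h2 : (l : Multiset α) = (Finset.univ : Finset α).val) :
    Finset.sort (Finset.univ : Finset α) (· ≤ ·) = l :=
  List.Perm.eq_of_pairwise' (Finset.pairwise_sort _ _) h1
    (Multiset.coe_eq_coe.mp (by rw [Finset.sort_eq, h2]))

/-! ### The concrete counterexample instance -/

@[reducible] def I0 : Inst where
  S := Fin 6
  T := Bool
  fS := inferInstance
  dS := inferInstance
  lS := inferInstance
  fT := inferInstance
  dT := inferInstance
  q := 3
  qpos := by norm_num
  r := 1
  τ := fun s => if 3 ≤ s.val then {true} else {false}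
  η := fun _ _ => 0

def Y0 : Finset (Fin 6) := {5, 2, 1, 0}

def c3 : Fin 6 := ⟨3, by omega⟩
def c4 : Fin 6 := ⟨4, by omega⟩

/-! #### The instance `J1 = I0 restricted to {5,4,2,1,0}` -/

local notation "J1" => restrict I0 (insert c4 Y0)

def e5 : {s : Fin 6 // s ∈ insert c4 Y0} := ⟨5, by decide⟩
def e4 : {s : Fin 6 // s ∈ insert c4 Y0} := ⟨4, by decide⟩
def e2 : {s : Fin 6 // s ∈ insert c4 Y0} := ⟨2, by decide⟩
def e1 : {s : Fin 6 // s ∈ insert c4 Y0} := ⟨1, by decide⟩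
def e0 : {s : Fin 6 // s ∈ insert c4 Y0} := ⟨0, by decide⟩

def W1 : Finset ({s : Fin 6 // s ∈ insert c4 Y0} × SeatT J1) :=
  {(e5, (none, 1, 0)), (e2, (none, 1, 1)), (e1, (none, 1, 2))}

lemma hη1 : ∀ (t : Bool) (j : ℕ), (J1).η t j = 0 := fun _ _ => rfl

lemma W1_matching : IsMatching J1 W1 := by decide

lemma W1_card : W1.card = (J1).q := by decide

lemma J1_rankMax_iff (M : Finset ((J1).S × SeatT J1)) :
    RankMaximal J1 M ↔ IsMatching J1 M ∧ M.card = (J1).q :=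
  rankMax_iff hη1 rfl W1_matching W1_card M

lemma J1_counts {M : Finset ((J1).S × SeatT J1)} (hM : RankMaximal J1 M) :
    Mu J1 M {true} + Mu J1 M {false} = 3 ∧ Mu J1 M {true} ≤ 2 ∧
      Mu J1 M {false} ≤ 3 := by
  obtain ⟨hmat, hcard⟩ := (J1_rankMax_iff M).1 hM
  refine ⟨?_, ?_, ?_⟩
  · rw [Mu_add (by decide) (fun s => by rcases s with ⟨⟨v, hv⟩, hs⟩; interval_cases v <;> simp_all <;> decide),
      covered_card hmat, hcard]
  · exact (Mu_le_card M {true}).trans (by decide)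
  · exact (Mu_le_card M {false}).trans (by decide)

lemma J1_ratio_true {M : Finset ((J1).S × SeatT J1)} {m : ℕ} (hm : Mu J1 M {true} = m)
    (hu : ({true} : Finset Bool) ∈ groups J1) :
    minRatio J1 M ≤ (((m : ℚ) / 2 : ℚ) : WithTop ℚ) := by
  refine le_trans (minRatio_le_ratio hu) (WithTop.coe_le_coe.mpr ?_)
  rw [hm, show (Su J1 {true}).card = 2 from by decide]
  norm_num

lemma J1_ratio_false {M : Finset ((J1).S × SeatT J1)} {m : ℕ} (hm : Mu J1 M {false} = m)
    (hu : ({false} : Finset Bool) ∈ groups J1) :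
    minRatio J1 M ≤ (((m : ℚ) / 3 : ℚ) : WithTop ℚ) := by
  refine le_trans (minRatio_le_ratio hu) (WithTop.coe_le_coe.mpr ?_)
  rw [hm, show (Su J1 {false}).card = 3 from by decide]
  norm_num

lemma J1_bound {M : Finset ((J1).S × SeatT J1)} (hM : RankMaximal J1 M) :
    minRatio J1 M ≤ (((1 : ℚ) / 2 : ℚ) : WithTop ℚ) := by
  obtain ⟨hsum, h1, h2⟩ := J1_counts hM
  rcases le_or_gt (Mu J1 M {true}) 1 with h | h
  · refine le_trans (J1_ratio_true rfl (by decide)) (WithTop.coe_le_coe.mpr ?_)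
    have : ((Mu J1 M {true} : ℚ)) ≤ 1 := by exact_mod_cast h
    linarith
  · have hm1 : Mu J1 M {true} = 2 := by omega
    have hm2 : Mu J1 M {false} = 1 := by omega
    refine le_trans (J1_ratio_false hm2 (by decide)) (WithTop.coe_le_coe.mpr ?_)
    norm_num

lemma J1_bound' {M : Finset ((J1).S × SeatT J1)} (hM : RankMaximal J1 M)
    (h4 : e4 ∈ covered J1 M) (h5 : e5 ∈ covered J1 M) :
    minRatio J1 M ≤ (((1 : ℚ) / 3 : ℚ) : WithTop ℚ) := by
  obtain ⟨hsum, h1, h2⟩ := J1_counts hM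
  have hge : 2 ≤ Mu J1 M {true} := by
    have := card_le_Mu (M := M) (u := ({true} : Finset Bool)) (B := {e4, e5})
      (by intro s hs
          simp only [Finset.mem_insert, Finset.mem_singleton] at hs
          rcases hs with rfl | rfl
          exacts [h4, h5])
      (by intro s hs
          simp only [Finset.mem_insert, Finset.mem_singleton] at hs
          rcases hs with rfl | rfl <;> decide)
    simpa [Finset.card_pair (show e4 ≠ e5 by decide)] using this
  have hm2 : Mu J1 M {false} = 1 := by omega
  refine le_trans (J1_ratio_false hm2 (by decide)) (WithTop.coe_le_coe.mpr ?_)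
  norm_num

lemma W1_minRatio : minRatio J1 W1 = (((1 : ℚ) / 2 : ℚ) : WithTop ℚ) := by
  refine minRatio_eq_of (u0 := {true}) (by decide) ?_ ?_
  · rw [show Mu J1 W1 {true} = 1 from by decide,
      show (Su J1 {true}).card = 2 from by decide]
    norm_num
  · intro u hu
    have hcases : ∀ w ∈ groups J1, w = {true} ∨ w = {false} := by decide
    rcases hcases u hu with rfl | rfl
    · rw [show Mu J1 W1 {true} = 1 from by decide,
        show (Su J1 {true}).card = 2 from by decide]
      norm_num
    · rw [show Mu J1 W1 {false} = 2 from by decide,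
        show (Su J1 {false}).card = 3 from by decide]
      norm_num

lemma W1_bal : BalancedRep J1 W1 := by
  refine ⟨(J1_rankMax_iff W1).2 ⟨W1_matching, W1_card⟩, ?_⟩
  intro M' hM'
  rw [W1_minRatio]
  exact J1_bound hM'

lemma J1_reject : ¬ ∃ M, BalancedRep J1 M ∧
    insert e4 (insert e5 (∅ : Finset (J1).S)) ⊆ covered J1 M := by
  rintro ⟨M, ⟨hrm, hopt⟩, hcov⟩
  have h4 : e4 ∈ covered J1 M := hcov (Finset.mem_insert_self _ _)
  have h5 : e5 ∈ covered J1 M :=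
    hcov (Finset.mem_insert_of_mem (Finset.mem_insert_self _ _))
  have hlb := hopt W1 W1_bal.1
  rw [W1_minRatio] at hlb
  have h := le_trans hlb (J1_bound' hrm h4 h5)
  rw [WithTop.coe_le_coe] at h
  norm_num at h

lemma J1_sort : Finset.sort (Finset.univ : Finset (J1).S) (· ≤ ·) = [e0, e1, e2, e4, e5] :=
  sort_univ_eq _ (by decide) (by decide)

/-! #### The instance `J2 = I0 restricted to {5,4,3,2,1,0}` -/

local notation "J2" => restrict I0 (insert c3 (insert c4 Y0))

def f5 : {s : Fin 6 // s ∈ insert c3 (insert c4 Y0)} := ⟨5, by decide⟩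
def f4 : {s : Fin 6 // s ∈ insert c3 (insert c4 Y0)} := ⟨4, by decide⟩
def f3 : {s : Fin 6 // s ∈ insert c3 (insert c4 Y0)} := ⟨3, by decide⟩
def f2 : {s : Fin 6 // s ∈ insert c3 (insert c4 Y0)} := ⟨2, by decide⟩
def f1 : {s : Fin 6 // s ∈ insert c3 (insert c4 Y0)} := ⟨1, by decide⟩
def f0 : {s : Fin 6 // s ∈ insert c3 (insert c4 Y0)} := ⟨0, by decide⟩

def W2a : Finset ({s : Fin 6 // s ∈ insert c3 (insert c4 Y0)} × SeatT J2) :=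
  {(f5, (none, 1, 0)), (f2, (none, 1, 1)), (f1, (none, 1, 2))}

def W2b : Finset ({s : Fin 6 // s ∈ insert c3 (insert c4 Y0)} × SeatT J2) :=
  {(f5, (none, 1, 0)), (f4, (none, 1, 1)), (f2, (none, 1, 2))}

lemma hη2 : ∀ (t : Bool) (j : ℕ), (J2).η t j = 0 := fun _ _ => rfl

lemma W2a_matching : IsMatching J2 W2a := by decide
lemma W2a_card : W2a.card = (J2).q := by decide
lemma W2b_matching : IsMatching J2 W2b := by decide
lemma W2b_card : W2b.card = (J2).q := by decide

lemma J2_rankMax_iff (M : Finset ((J2).S × SeatT J2)) :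
    RankMaximal J2 M ↔ IsMatching J2 M ∧ M.card = (J2).q :=
  rankMax_iff hη2 rfl W2a_matching W2a_card M

lemma J2_counts {M : Finset ((J2).S × SeatT J2)} (hM : RankMaximal J2 M) :
    Mu J2 M {true} + Mu J2 M {false} = 3 := by
  obtain ⟨hmat, hcard⟩ := (J2_rankMax_iff M).1 hM
  rw [Mu_add (by decide) (fun s => by rcases s with ⟨⟨v, hv⟩, hs⟩; interval_cases v <;> simp_all <;> decide),
    covered_card hmat, hcard]

lemma J2_ratio_true {M : Finset ((J2).S × SeatT J2)} {m : ℕ} (hm : Mu J2 M {true} = m) :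
    minRatio J2 M ≤ (((m : ℚ) / 3 : ℚ) : WithTop ℚ) := by
  refine le_trans (minRatio_le_ratio (u := ({true} : Finset Bool)) (by decide)) (WithTop.coe_le_coe.mpr ?_)
  rw [hm, show (Su J2 {true}).card = 3 from by decide]
  norm_num

lemma J2_ratio_false {M : Finset ((J2).S × SeatT J2)} {m : ℕ} (hm : Mu J2 M {false} = m) :
    minRatio J2 M ≤ (((m : ℚ) / 3 : ℚ) : WithTop ℚ) := by
  refine le_trans (minRatio_le_ratio (u := ({false} : Finset Bool)) (by decide)) (WithTop.coe_le_coe.mpr ?_)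
  rw [hm, show (Su J2 {false}).card = 3 from by decide]
  norm_num

lemma J2_bound {M : Finset ((J2).S × SeatT J2)} (hM : RankMaximal J2 M) :
    minRatio J2 M ≤ (((1 : ℚ) / 3 : ℚ) : WithTop ℚ) := by
  have hsum := J2_counts hM
  rcases le_or_gt (Mu J2 M {true}) 1 with h | h
  · refine le_trans (J2_ratio_true rfl) (WithTop.coe_le_coe.mpr ?_)
    have : ((Mu J2 M {true} : ℚ)) ≤ 1 := by exact_mod_cast h
    linarith
  · have hm2 : Mu J2 M {false} ≤ 1 := by omega
    refine le_trans (J2_ratio_false rfl) (WithTop.coe_le_coe.mpr ?_)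
    have : ((Mu J2 M {false} : ℚ)) ≤ 1 := by exact_mod_cast hm2
    linarith

lemma J2_groups_cases : ∀ w ∈ groups J2, w = {true} ∨ w = {false} := by decide

lemma W2a_minRatio : minRatio J2 W2a = (((1 : ℚ) / 3 : ℚ) : WithTop ℚ) := by
  refine minRatio_eq_of (u0 := {true}) (by decide) ?_ ?_
  · rw [show Mu J2 W2a {true} = 1 from by decide,
      show (Su J2 {true}).card = 3 from by decide]
    norm_num
  · intro u hu
    rcases J2_groups_cases u hu with rfl | rfl
    · rw [show Mu J2 W2a {true} = 1 from by decide,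
        show (Su J2 {true}).card = 3 from by decide]
      norm_num
    · rw [show Mu J2 W2a {false} = 2 from by decide,
        show (Su J2 {false}).card = 3 from by decide]
      norm_num

lemma W2b_minRatio : minRatio J2 W2b = (((1 : ℚ) / 3 : ℚ) : WithTop ℚ) := by
  refine minRatio_eq_of (u0 := {false}) (by decide) ?_ ?_
  · rw [show Mu J2 W2b {false} = 1 from by decide,
      show (Su J2 {false}).card = 3 from by decide]
    norm_num
  · intro u hu
    rcases J2_groups_cases u hu with rfl | rfl
    · rw [show Mu J2 W2b {true} = 2 from by decide,
        show (Su J2 {true}).card = 3 from by decide]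
      norm_num
    · rw [show Mu J2 W2b {false} = 1 from by decide,
        show (Su J2 {false}).card = 3 from by decide]
      norm_num

lemma W2a_bal : BalancedRep J2 W2a := by
  refine ⟨(J2_rankMax_iff W2a).2 ⟨W2a_matching, W2a_card⟩, ?_⟩
  intro M' hM'
  rw [W2a_minRatio]
  exact J2_bound hM'

lemma W2b_bal : BalancedRep J2 W2b := by
  refine ⟨(J2_rankMax_iff W2b).2 ⟨W2b_matching, W2b_card⟩, ?_⟩
  intro M' hM'
  rw [W2b_minRatio]
  exact J2_bound hM'

lemma J2_sort : Finset.sort (Finset.univ : Finset (J2).S) (· ≤ ·)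
    = [f0, f1, f2, f3, f4, f5] :=
  sort_univ_eq _ (by decide) (by decide)
/-- the greedy choice function does not satisfy substitutability:
there are an instance `I`, a set `Y` of students and distinct students
`s₁, s₂ ∉ Y` such that `s₂ ∉ Ch*(I|_{Y ∪ {s₂}})` but `s₂ ∈ Ch*(I|_{Y ∪ {s₁, s₂}})`. -/
theorem chStar_not_substitutable :
    ∃ (I : Inst) (Y : Finset I.S) (s₁ s₂ : I.S),
      s₁ ≠ s₂ ∧ s₁ ∉ Y ∧ s₂ ∉ Y ∧
      (⟨s₂, Finset.mem_insert_self s₂ Y⟩ : (restrict I (insert s₂ Y)).S) ∉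
        ChStar (restrict I (insert s₂ Y)) ∧
      (⟨s₂, by simp⟩ : (restrict I (insert s₁ (insert s₂ Y))).S) ∈
        ChStar (restrict I (insert s₁ (insert s₂ Y))) := by
  refine ⟨I0, Y0, c3, c4, by decide, by decide, by decide, ?_, ?_⟩
  · unfold ChStar
    refine eval_not_mem _ _ e5 [e2, e1, e0] ?_ ?_ ?_ (by decide) (by decide) _
      (congrArg List.reverse J1_sort)
    · intro A s; dsimp only; split <;> simp
    · exact if_pos ⟨W1, W1_bal, by decide⟩
    · exact if_neg J1_reject
  · unfold ChStar
    refine eval_mem _ _ f5 [f3, f2, f1, f0] ?_ ?_ ?_ _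
      (congrArg List.reverse J2_sort)
    · intro A s; dsimp only; split <;> simp
    · exact if_pos ⟨W2a, W2a_bal, by decide⟩
    · exact if_pos ⟨W2b, W2b_bal, by decide⟩
end
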